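/- Fix a finite connected weighted graph G and positive site weights α̂. For every integer k ≥ 3 and every function f : Ξ_k → ℝ that vanishes on Ξ_k \ Ω_{k,k}, define g : Ξ_{k−1} → ℝ by g(ξ) = sqrt( Σ_{x∈V} (α̂_x/|α̂|) f(ξ + δ_x)² ). Then g vanishes on Ξ_{k−1} \ Ω_{k−1,k−1}, and one has the identity ‖g‖²_{α̂,k−1} = ((|α̂|+k−1)/|α̂|) · ‖f‖²_{α̂,k} and the inequality E_{G,α̂,k−1}(g) ≤ ((|α̂|+k−1)/|α̂|) · E_{G,α̂,k}(f). -/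

import Mathlib

open scoped BigOperators Classical

noncomputable section

/-- The configuration space of `k` particles on the finite site set `V`. -/
def Config (V : Type*) [Fintype V] (k : ℕ) : Type _ :=
  {η : V → ℕ // ∑ x, η x = k}

namespace Config

variable {V : Type*} [Fintype V] [DecidableEq V] {k : ℕ}

lemma apply_le (η : Config V k) (x : V) : η.1 x ≤ k := by
  have h := Finset.single_le_sum (f := η.1) (fun i _ => Nat.zero_le _) (Finset.mem_univ x)
  simpa [η.2] using h

instance instFintype : Fintype (Config V k) :=
  Fintype.ofInjective
    (fun η : Config V k => (fun x => (⟨η.1 x, Nat.lt_succ_of_le (η.apply_le x)⟩ : Fin (k+1))))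
    (fun a b hab => Subtype.ext (funext fun x => congrArg Fin.val (congrFun hab x)))

/-- The configuration `η - δ_x + δ_y` (move a particle from `x` to `y`);
by convention it is `η` itself when `η` has no particle at `x`. -/
def move (η : Config V k) (x y : V) : Config V k :=
  if h : η.1 x = 0 then η else
    ⟨fun z => η.1 z - (if z = x then 1 else 0) + (if z = y then 1 else 0), by
      have hle : ∀ z : V, (if z = x then 1 else 0) ≤ η.1 z := fun z => by
        by_cases hz : z = x
        · simpa [hz] using Nat.one_le_iff_ne_zero.2 h
        · simp [hz]
      have cast_term : ∀ z : V,
          ((η.1 z - (if z = x then 1 else 0) + (if z = y then 1 else 0) : ℕ) : ℤ)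
            = (η.1 z : ℤ) - (if z = x then 1 else 0) + (if z = y then 1 else 0) := by
        intro z
        rw [Nat.cast_add, Nat.cast_sub (hle z)]
        by_cases hz : z = x <;> by_cases hz' : z = y <;> simp [hz, hz']
      have key : ((∑ z, (η.1 z - (if z = x then 1 else 0) + (if z = y then 1 else 0)) : ℕ) : ℤ)
          = (k : ℤ) := by
        rw [Nat.cast_sum]
        rw [Finset.sum_congr rfl (fun z _ => cast_term z)]
        rw [Finset.sum_add_distrib, Finset.sum_sub_distrib]
        have h1 : (∑ z, (η.1 z : ℤ)) = (k : ℤ) := by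
          rw [← Nat.cast_sum, η.2]
        rw [h1]
        simp
      exact_mod_cast key⟩

/-- The configuration `η + δ_x`. -/
def addOne (η : Config V k) (x : V) : Config V (k + 1) :=
  ⟨fun z => η.1 z + (if z = x then 1 else 0), by
    rw [Finset.sum_add_distrib, η.2]
    simp⟩

end Config

section Defs

variable {V : Type*} [Fintype V] [DecidableEq V]

/-- The configuration with `k` particles stacked at `x`. -/
def stackConfig (V : Type*) [Fintype V] [DecidableEq V] (k : ℕ) (x : V) : Config V k :=
  ⟨fun z => if z = x then k else 0, by simp⟩

/-- Normalization constant `Z_{α,k}`. -/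
def sipZ (α : V → ℝ) (k : ℕ) : ℝ :=
  Real.Gamma ((∑ x, α x) + k) / (Real.Gamma (∑ x, α x) * (Nat.factorial k))

/-- The reversible (Dirichlet-multinomial) measure `μ_{α,k}` of SIP. -/
def sipMeasure (α : V → ℝ) {k : ℕ} (η : Config V k) : ℝ :=
  (sipZ α k)⁻¹ * ∏ x, Real.Gamma (α x + η.1 x) / (Real.Gamma (α x) * (Nat.factorial (η.1 x)))

/-- The Dirichlet form of `SIP_k(G, α)`. -/
def dirichletForm (c : V → V → ℝ) (α : V → ℝ) {k : ℕ} (f : Config V k → ℝ) : ℝ :=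
  (1 / 2) * ∑ η : Config V k, ∑ x, ∑ y,
    sipMeasure α η * (c x y * η.1 x * (α y + η.1 y) * (f (η.move x y) - f η) ^ 2)

/-- Mean of `f` under `μ_{α,k}`. -/
def sipMean (α : V → ℝ) {k : ℕ} (f : Config V k → ℝ) : ℝ :=
  ∑ η : Config V k, sipMeasure α η * f η

/-- Variance of `f` under `μ_{α,k}`. -/
def sipVar (α : V → ℝ) {k : ℕ} (f : Config V k → ℝ) : ℝ :=
  ∑ η : Config V k, sipMeasure α η * (f η - sipMean α f) ^ 2

/-- Squared `L²(μ_{α,k})`-norm of `f`. -/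
def sipNormSq (α : V → ℝ) {k : ℕ} (f : Config V k → ℝ) : ℝ :=
  ∑ η : Config V k, sipMeasure α η * (f η) ^ 2

/-- The spectral gap `gap_k(G,α)` of the `k`-particle SIP. -/
def sipGap (c : V → V → ℝ) (α : V → ℝ) (k : ℕ) : ℝ :=
  sInf {r : ℝ | ∃ f : Config V k → ℝ, (∃ η ζ : Config V k, f η ≠ f ζ) ∧
    r = dirichletForm c α f / sipVar α f}

/-- `gap_SIP(G,α) = inf_{k ≥ 2} gap_k(G,α)`. -/
def sipGapInf (c : V → V → ℝ) (α : V → ℝ) : ℝ :=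
  sInf {r : ℝ | ∃ k : ℕ, 2 ≤ k ∧ r = sipGap c α k}

/-- The simple graph underlying a symmetric family of conductances. -/
def graphOf (c : V → V → ℝ) : SimpleGraph V where
  Adj x y := x ≠ y ∧ (0 < c x y ∨ 0 < c y x)
  symm := ⟨fun x y h => ⟨h.1.symm, h.2.symm⟩⟩
  loopless := ⟨fun x h => h.1 rfl⟩

/-- The diameter of the weighted graph: maximal graph distance between two sites. -/
def graphDiam (c : V → V → ℝ) : ℕ :=
  Finset.univ.sup (fun p : V × V => (graphOf c).dist p.1 p.2)

/-- The minimal positive conductance. -/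
def cMin (c : V → V → ℝ) : ℝ :=
  sInf {r : ℝ | 0 < r ∧ ∃ x y, c x y = r}

/-- Minimal site weight. -/
def alphaMin (α : V → ℝ) : ℝ := sInf (Set.range α)

/-- Maximal site weight. -/
def alphaMax (α : V → ℝ) : ℝ := sSup (Set.range α)

/-- Conductances of the complete graph on `V`. -/
def completeCond (V : Type*) [DecidableEq V] : V → V → ℝ :=
  fun x y => if x = y then 0 else 1

/-- The generator matrix of `SIP_k(G,α)` acting on `ℝ^{Ξ_k}` by `mulVec`. -/
def sipMatrix (c : V → V → ℝ) (α : V → ℝ) (k : ℕ) : Matrix (Config V k) (Config V k) ℝ :=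
  fun η ζ => ∑ x, ∑ y, c x y * η.1 x * (α y + η.1 y) *
    ((if η.move x y = ζ then 1 else 0) - (if ζ = η then 1 else 0))

/-- The generator matrix `A_{β,k}` of `k` independent random walks. -/
def rwPartMatrix (c : V → V → ℝ) (β : V → ℝ) (k : ℕ) : Matrix (Config V k) (Config V k) ℝ :=
  fun η ζ => ∑ x, ∑ y, c x y * η.1 x * β y *
    ((if η.move x y = ζ then 1 else 0) - (if ζ = η then 1 else 0))

/-- The generator matrix `B_k` of the pure interaction (fast) dynamics. -/
def clumpMatrix (c : V → V → ℝ) (k : ℕ) : Matrix (Config V k) (Config V k) ℝ :=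
  fun η ζ => ∑ x, ∑ y, c x y * η.1 x * η.1 y *
    ((if η.move x y = ζ then 1 else 0) - (if ζ = η then 1 else 0))

/-- The generator matrix of the purely absorbing (killed) SIP. -/
def killedMatrix (c : V → V → ℝ) (α ω : V → ℝ) (k : ℕ) :
    Matrix (Config V k) (Config V k) ℝ :=
  fun η ζ => sipMatrix c α k η ζ - (if ζ = η then ∑ x, ω x * η.1 x else 0)

/-- `η ∈ Ω_k`: absorbing configurations for the fast dynamics. -/
def inOmega (c : V → V → ℝ) {k : ℕ} (η : Config V k) : Prop :=
  ∀ x y, c x y * η.1 x * η.1 y = 0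

/-- The number of occupied sites (stacks) of a configuration. -/
def numStacks {k : ℕ} (η : Config V k) : ℕ :=
  (Finset.univ.filter fun x => 0 < η.1 x).card

/-- Jump rates of `k` independent random walks: `r^A(η,ζ)`. -/
def rateA (c : V → V → ℝ) (β : V → ℝ) {k : ℕ} (η ζ : Config V k) : ℝ :=
  ∑ x, ∑ y, if η.1 x ≠ 0 ∧ η.move x y = ζ then c x y * η.1 x * β y else 0

/-- Metastable jump rates `r^M(η,ξ) = Σ_ζ r^A(η,ζ) h_ξ(ζ)`, given absorption
probabilities `h`. -/
def rateM (c : V → V → ℝ) (β : V → ℝ) {k : ℕ} (h : Config V k → Config V k → ℝ)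
    (η ξ : Config V k) : ℝ :=
  ∑ ζ, rateA c β η ζ * h ξ ζ

/-- The metastable generator on `Ω_k`, given absorption probabilities `h`. -/
def metaGen (c : V → V → ℝ) (β : V → ℝ) {k : ℕ} (h : Config V k → Config V k → ℝ)
    (g : Config V k → ℝ) (η : Config V k) : ℝ :=
  ∑ ξ, if inOmega c ξ ∧ ξ ≠ η then rateM c β h η ξ * (g ξ - g η) else 0

/-- The (restricted) annihilation operator `â_{k+1} g (η) = Σ_x η_x g(η - δ_x)`. -/
def annihilate {k : ℕ} (g : Config V k → ℝ) (η : Config V (k + 1)) : ℝ :=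
  ∑ x, ∑ ξ : Config V k, if ξ.addOne x = η then (η.1 x : ℝ) * g ξ else 0

/-- The SIP generator as an operator on functions. -/
def sipGen (c : V → V → ℝ) (α : V → ℝ) {k : ℕ} (f : Config V k → ℝ) (η : Config V k) : ℝ :=
  ∑ x, ∑ y, c x y * η.1 x * (α y + η.1 y) * (f (η.move x y) - f η)

/-- The purely absorbing (killed) SIP generator. -/
def killedGen (c : V → V → ℝ) (α ω : V → ℝ) {k : ℕ} (f : Config V k → ℝ)
    (η : Config V k) : ℝ :=
  sipGen c α f η - f η * ∑ x, ω x * η.1 x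

/-- Spectral gap of the killed `k`-particle SIP (Rayleigh quotient infimum). -/
def killedGap (c : V → V → ℝ) (α ω : V → ℝ) (k : ℕ) : ℝ :=
  sInf {r : ℝ | ∃ f : Config V k → ℝ, f ≠ 0 ∧
    r = (∑ η, sipMeasure α η * f η * (-(killedGen c α ω f η))) / sipNormSq α f}

/-- `λ_{k,k}(β)`: the variational bottom eigenvalue of `k` independent walks killed
upon two particles becoming adjacent. -/
def lamLevel (c : V → V → ℝ) (β : V → ℝ) (k : ℕ) : ℝ :=
  sInf {r : ℝ | ∃ f : Config V k → ℝ, f ≠ 0 ∧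
    (∀ η : Config V k, ¬(inOmega c η ∧ numStacks η = k) → f η = 0) ∧
    r = dirichletForm c β f / sipNormSq β f}


/-- The symmetrizing measure `ς_{β,k,m}` on stack configurations. -/
def stackMeasure (β : V → ℝ) {k : ℕ} (η : Config V k) : ℝ :=
  ∏ x, if 0 < η.1 x then β x / η.1 x else 1

/-- The lookdown generator of the SIP with killing, on labeled configurations. -/
def lookdownGen (c : V → V → ℝ) (α ω : V → ℝ) (k : ℕ) (φ : (Fin k → V) → ℝ)
    (v : Fin k → V) : ℝ :=
  (∑ i : Fin k, ∑ x, ∑ y, c x y * (if x = v i then 1 else 0) *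
      (α y + 2 * ∑ j : Fin k, (if (j : ℕ) < (i : ℕ) ∧ v j = y then 1 else 0)) *
      (φ (Function.update v i y) - φ v))
    - φ v * ∑ i, ω (v i)

/-- The unlabeling map `Φ_k` from labeled to unlabeled configurations. -/
def unlabel {k : ℕ} (v : Fin k → V) : Config V k :=
  ⟨fun z => (Finset.univ.filter fun i => v i = z).card, by
    have h := Finset.card_eq_sum_card_fiberwise
      (f := v) (s := Finset.univ) (t := Finset.univ) (fun i _ => Finset.mem_univ _)
    simpa using h.symm⟩

/-- The symmetrization operator `S_k`. -/
def symmetrize (k : ℕ) (φ : (Fin k → V) → ℝ) (v : Fin k → V) : ℝ :=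
  (1 / (Nat.factorial k : ℝ)) * ∑ σ : Equiv.Perm (Fin k), φ (fun i => v (σ i))

/-- `η + δ_x` on the full configuration space `ℕ^V`. -/
def addFn (η : V → ℕ) (x : V) : V → ℕ := fun z => η z + (if z = x then 1 else 0)

/-- `η - δ_x` on the full configuration space (truncated subtraction). -/
def remFn (η : V → ℕ) (x : V) : V → ℕ := fun z => η z - (if z = x then 1 else 0)

/-- `η - δ_x + δ_y` on the full configuration space; `η` itself when `η x = 0`. -/
def moveFn (η : V → ℕ) (x y : V) : V → ℕ :=
  if η x = 0 then η else fun z => η z - (if z = x then 1 else 0) + (if z = y then 1 else 0)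

/-- The generator of the non-conservative (open) SIP. -/
def openGen (c : V → V → ℝ) (α ω θ : V → ℝ) (f : (V → ℕ) → ℝ) (η : V → ℕ) : ℝ :=
  (∑ x, ∑ y, c x y * η x * (α y + η y) * (f (moveFn η x y) - f η))
  + ∑ x, ω x * ((η x : ℝ) * (1 + θ x) * (f (remFn η x) - f η)
      + θ x * (α x + η x) * (f (addFn η x) - f η))

/-- One-site Meixner duality function at density `0`:
`d_{a,0}(m,n) = (n!/(n-m)!) (Γ(a)/Γ(a+m)) 1{m ≤ n}`. -/
def dualD0 (a : ℝ) (m n : ℕ) : ℝ :=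
  if m ≤ n then (Nat.descFactorial n m : ℝ) * (Real.Gamma a / Real.Gamma (a + m)) else 0

/-- One-site Meixner duality function at density `ϱ`. -/
def dualD (a ϱ : ℝ) (m n : ℕ) : ℝ :=
  ∑ l ∈ Finset.range (m + 1), (Nat.choose m l : ℝ) * dualD0 a l n * (-ϱ) ^ (m - l)

/-- The orthogonal duality function `D_{α,ϱ}(ξ,η)`. -/
def dualityFn (α : V → ℝ) (ϱ : ℝ) {k : ℕ} (ξ : Config V k) (η : V → ℕ) : ℝ :=
  ∏ x, dualD (α x) ϱ (ξ.1 x) (η x)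

/-- The polynomial `F_{α,ϱ}^ψ` associated to `ψ : Ξ_k → ℝ`. -/
def liftF (α : V → ℝ) (ϱ : ℝ) {k : ℕ} (ψ : Config V k → ℝ) (η : V → ℕ) : ℝ :=
  ∑ ξ : Config V k, sipMeasure α ξ * ψ ξ * dualityFn α ϱ ξ η

end Defs


end

noncomputable section AuxKill

variable {V : Type*} [Fintype V] [DecidableEq V]

namespace Config

lemma addOne_apply {k : ℕ} (ξ : Config V k) (x z : V) :
    (ξ.addOne x).1 z = ξ.1 z + (if z = x then 1 else 0) := rfl

lemma move_apply {k : ℕ} (η : Config V k) (x y z : V) (h : η.1 x ≠ 0) :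
    (η.move x y).1 z = η.1 z - (if z = x then 1 else 0) + (if z = y then 1 else 0) := by
  unfold Config.move
  exact congrArg (fun w : Config V k => w.1 z) (dif_neg h)

/-- remove one particle at an occupied site -/
def remOne {k : ℕ} (η : Config V (k+1)) (x : V) (h : η.1 x ≠ 0) : Config V k :=
  ⟨fun z => η.1 z - (if z = x then 1 else 0), by
    have hle : ∀ z ∈ Finset.univ, (if z = x then 1 else 0) ≤ η.1 z := by
      intro z _
      by_cases hz : z = x
      · simpa [hz] using Nat.one_le_iff_ne_zero.2 h
      · simp [hz]
    rw [Finset.sum_tsub_distrib Finset.univ hle, η.2]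
    simp⟩

lemma addOne_remOne {k : ℕ} (η : Config V (k+1)) (x : V) (h : η.1 x ≠ 0) :
    (η.remOne x h).addOne x = η := by
  apply Subtype.ext; funext z
  show (η.1 z - (if z = x then 1 else 0)) + (if z = x then 1 else 0) = η.1 z
  by_cases hz : z = x
  · subst hz; rw [if_pos rfl]; omega
  · simp [hz]

lemma remOne_addOne {k : ℕ} (ξ : Config V k) (x : V) (h : (ξ.addOne x).1 x ≠ 0) :
    (ξ.addOne x).remOne x h = ξ := by
  apply Subtype.ext; funext z
  show (ξ.1 z + (if z = x then 1 else 0)) - (if z = x then 1 else 0) = ξ.1 z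
  omega

lemma addOne_move {k : ℕ} (ξ : Config V k) (x y z : V) (hx : ξ.1 x ≠ 0) (hzx : z ≠ x) :
    (ξ.move x y).addOne z = (ξ.addOne z).move x y := by
  have hx' : (ξ.addOne z).1 x ≠ 0 := by
    rw [Config.addOne_apply]; omega
  apply Subtype.ext; funext w
  show ((ξ.move x y).addOne z).1 w = ((ξ.addOne z).move x y).1 w
  rw [Config.addOne_apply, Config.move_apply _ _ _ _ hx,
    Config.move_apply _ _ _ _ hx', Config.addOne_apply]
  clear hx' hzx
  split_ifs <;> subst_vars <;> omega

end Config

/-- reindexing sums over `(ξ, x) ↦ ξ + δ_x`. -/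
lemma sum_addOne_eq {k : ℕ} (F : Config V (k+1) → V → ℝ) :
    ∑ ξ : Config V k, ∑ x, F (ξ.addOne x) x
      = ∑ η : Config V (k+1), ∑ x, if 0 < η.1 x then F η x else 0 := by
  classical
  calc ∑ ξ : Config V k, ∑ x, F (ξ.addOne x) x
      = ∑ p : Config V k × V, F (p.1.addOne p.2) p.2 := by
        rw [Fintype.sum_prod_type]
    _ = ∑ q ∈ Finset.univ.filter (fun q : Config V (k+1) × V => 0 < q.1.1 q.2),
          F q.1 q.2 := by
        refine Finset.sum_bij' (fun p _ => (p.1.addOne p.2, p.2))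
          (fun q hq => (q.1.remOne q.2
            (Nat.pos_iff_ne_zero.mp (Finset.mem_filter.1 hq).2), q.2)) ?_ ?_ ?_ ?_ ?_
        · intro p _
          refine Finset.mem_filter.2 ⟨Finset.mem_univ _, ?_⟩
          rw [Config.addOne_apply]
          simp
        · intro q _; exact Finset.mem_univ _
        · intro p _
          simp only
          rw [Prod.mk.injEq]
          exact ⟨Config.remOne_addOne _ _ _, rfl⟩
        · intro q hq
          simp only
          rw [Prod.mk.injEq]
          refine ⟨Config.addOne_remOne _ _ _, rfl⟩
        · intro p _; rfl
    _ = ∑ η : Config V (k+1), ∑ x, if 0 < η.1 x then F η x else 0 := by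
        rw [Finset.sum_filter, Fintype.sum_prod_type]

lemma numStacks_le_total {k : ℕ} (η : Config V k) : numStacks η ≤ k := by
  unfold numStacks
  calc (Finset.univ.filter fun x => 0 < η.1 x).card
      = ∑ _z ∈ (Finset.univ.filter fun x => 0 < η.1 x), 1 := by
        rw [Finset.card_eq_sum_ones]
    _ ≤ ∑ z ∈ (Finset.univ.filter fun x => 0 < η.1 x), η.1 z :=
        Finset.sum_le_sum fun z hz => (Finset.mem_filter.1 hz).2
    _ ≤ ∑ z, η.1 z := Finset.sum_le_sum_of_subset (Finset.filter_subset _ _)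
    _ = k := η.2

lemma numStacks_eq_iff {k : ℕ} (η : Config V k) :
    numStacks η = k ↔ ∀ z, η.1 z ≤ 1 := by
  classical
  have hsum : ∑ z ∈ (Finset.univ.filter fun x => 0 < η.1 x), η.1 z = k := by
    rw [Finset.sum_filter_of_ne, η.2]
    intro z _ hz
    exact Nat.pos_of_ne_zero hz
  constructor
  · intro h z
    have h1 : ∑ _z ∈ (Finset.univ.filter fun x => 0 < η.1 x), 1
        = ∑ z ∈ (Finset.univ.filter fun x => 0 < η.1 x), η.1 z := by
      rw [hsum, ← Finset.card_eq_sum_ones]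
      exact h
    have h2 := (Finset.sum_eq_sum_iff_of_le
      (fun i hi => (Finset.mem_filter.1 hi).2)).1 h1
    by_cases hz : 0 < η.1 z
    · have := h2 z (Finset.mem_filter.2 ⟨Finset.mem_univ _, hz⟩)
      omega
    · omega
  · intro h
    unfold numStacks
    rw [Finset.card_eq_sum_ones]
    have heq : ∑ _z ∈ (Finset.univ.filter fun x => 0 < η.1 x), 1
        = ∑ z ∈ (Finset.univ.filter fun x => 0 < η.1 x), η.1 z := by
      refine Finset.sum_congr rfl fun z hz => ?_
      have h1 := (Finset.mem_filter.1 hz).2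
      have h2 := h z
      omega
    rw [heq, hsum]

lemma sum_ite_pos_count {k : ℕ} (η : Config V k) (T : ℝ) :
    (∑ x, if 0 < η.1 x then T else 0) = (numStacks η : ℝ) * T := by
  classical
  rw [Finset.sum_ite, Finset.sum_const, Finset.sum_const, smul_zero, add_zero,
    nsmul_eq_mul, numStacks]

lemma inOmega_mono {c : V → V → ℝ} {k k' : ℕ} {η : Config V k} {ζ : Config V k'}
    (hle : ∀ z, η.1 z ≤ ζ.1 z) (hζ : inOmega c ζ) : inOmega c η := by
  intro x y
  have h := hζ x y
  rcases mul_eq_zero.1 h with h1 | h2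
  · rcases mul_eq_zero.1 h1 with hc | hx
    · rw [hc]; ring
    · have h3 : ζ.1 x = 0 := by exact_mod_cast hx
      have hx0 : η.1 x = 0 := by have := hle x; omega
      rw [hx0]; simp
  · have h3 : ζ.1 y = 0 := by exact_mod_cast h2
    have hy0 : η.1 y = 0 := by have := hle y; omega
    rw [hy0]; simp

end AuxKill
noncomputable section AuxKill2

variable {V : Type*} [Fintype V] [DecidableEq V]

lemma sipZ_pos (β : V → ℝ) (hβ : ∀ x, 0 < β x) (hne : Nonempty V) (k : ℕ) :
    0 < sipZ β k := by
  haveI := hne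
  have hS : 0 < ∑ z, β z := Finset.sum_pos (fun z _ => hβ z) Finset.univ_nonempty
  have h1 : (0:ℝ) < (∑ x, β x) + k := add_pos_of_pos_of_nonneg hS (Nat.cast_nonneg k)
  exact div_pos (Real.Gamma_pos_of_pos h1)
    (mul_pos (Real.Gamma_pos_of_pos hS) (by exact_mod_cast Nat.factorial_pos k))

lemma sipMeasure_pos {k : ℕ} (β : V → ℝ) (hβ : ∀ x, 0 < β x) (hne : Nonempty V)
    (η : Config V k) : 0 < sipMeasure β η := by
  unfold sipMeasure
  refine mul_pos (inv_pos.2 (sipZ_pos β hβ hne k)) (Finset.prod_pos fun x _ => ?_)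
  exact div_pos
    (Real.Gamma_pos_of_pos (add_pos_of_pos_of_nonneg (hβ x) (Nat.cast_nonneg _)))
    (mul_pos (Real.Gamma_pos_of_pos (hβ x)) (by exact_mod_cast Nat.factorial_pos _))

lemma sipMeasure_addOne {k : ℕ} (β : V → ℝ) (hβ : ∀ x, 0 < β x) (hne : Nonempty V)
    (ξ : Config V k) (x : V) (hx : ξ.1 x = 0) :
    sipMeasure β ξ * (β x / ∑ z, β z)
      = (((∑ z, β z) + k) / (((k : ℝ) + 1) * ∑ z, β z)) * sipMeasure β (ξ.addOne x) := by
  classical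
  haveI := hne
  have hS : 0 < ∑ z, β z := Finset.sum_pos (fun z _ => hβ z) Finset.univ_nonempty
  have hSk : (0:ℝ) < (∑ z, β z) + k := add_pos_of_pos_of_nonneg hS (Nat.cast_nonneg k)
  have hk1 : (0:ℝ) < (k:ℝ) + 1 := by positivity
  have hprod : (∏ z, Real.Gamma (β z + ((ξ.addOne x).1 z)) /
        (Real.Gamma (β z) * (Nat.factorial ((ξ.addOne x).1 z))))
      = (∏ z, Real.Gamma (β z + ξ.1 z) /
          (Real.Gamma (β z) * (Nat.factorial (ξ.1 z)))) * β x := by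
    have step : ∀ z, Real.Gamma (β z + ((ξ.addOne x).1 z)) /
          (Real.Gamma (β z) * (Nat.factorial ((ξ.addOne x).1 z)))
        = (Real.Gamma (β z + ξ.1 z) / (Real.Gamma (β z) * (Nat.factorial (ξ.1 z)))) *
          (if z = x then β x else 1) := by
      intro z
      by_cases hz : z = x
      · subst hz
        rw [Config.addOne_apply, if_pos rfl, if_pos rfl, hx]
        have hg : Real.Gamma (β z + 1) = β z * Real.Gamma (β z) :=
          Real.Gamma_add_one (ne_of_gt (hβ z))
        have hgne : Real.Gamma (β z) ≠ 0 := ne_of_gt (Real.Gamma_pos_of_pos (hβ z))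
        norm_num [hg]
        field_simp
      · rw [Config.addOne_apply, if_neg hz, if_neg hz]
        simp
    rw [Finset.prod_congr rfl (fun z _ => step z), Finset.prod_mul_distrib,
      Finset.prod_ite_eq' Finset.univ x (fun _ => β x)]
    simp
  have hgam : Real.Gamma ((∑ z, β z) + ((k:ℕ)+1 : ℕ))
      = ((∑ z, β z) + k) * Real.Gamma ((∑ z, β z) + k) := by
    have e1 : ((∑ z, β z) + (((k:ℕ)+1 : ℕ) : ℝ)) = ((∑ z, β z) + k) + 1 := by
      push_cast; ring
    rw [e1, Real.Gamma_add_one (ne_of_gt hSk)]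
  have hfac : ((Nat.factorial (k+1) : ℕ) : ℝ) = ((k:ℝ)+1) * (Nat.factorial k : ℝ) := by
    rw [Nat.factorial_succ]; push_cast; ring
  have hZ : sipZ β (k+1) = sipZ β k * (((∑ z, β z) + k) / ((k:ℝ)+1)) := by
    unfold sipZ
    rw [hgam, hfac]
    have h1 : Real.Gamma (∑ x, β x) ≠ 0 := ne_of_gt (Real.Gamma_pos_of_pos hS)
    have h2 : (Nat.factorial k : ℝ) ≠ 0 := by exact_mod_cast (Nat.factorial_pos k).ne'
    field_simp
  have hZ0 : sipZ β k ≠ 0 := ne_of_gt (sipZ_pos β hβ hne k)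
  have hmain : sipMeasure β (ξ.addOne x)
      = sipMeasure β ξ * (((k:ℝ)+1) / ((∑ z, β z) + k)) * β x := by
    unfold sipMeasure
    rw [hprod, hZ]
    field_simp
  rw [hmain]
  field_simp

lemma sqrt_sum_diff_sq_le {ι : Type*} [Fintype ι] (w u v : ι → ℝ) (hw : ∀ i, 0 ≤ w i) :
    (Real.sqrt (∑ i, w i * u i ^ 2) - Real.sqrt (∑ i, w i * v i ^ 2)) ^ 2
      ≤ ∑ i, w i * (u i - v i) ^ 2 := by
  have ha : (0:ℝ) ≤ ∑ i, w i * u i ^ 2 :=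
    Finset.sum_nonneg fun i _ => mul_nonneg (hw i) (sq_nonneg _)
  have hb : (0:ℝ) ≤ ∑ i, w i * v i ^ 2 :=
    Finset.sum_nonneg fun i _ => mul_nonneg (hw i) (sq_nonneg _)
  have hcs : (∑ i, w i * (u i * v i))
      ≤ Real.sqrt (∑ i, w i * u i ^ 2) * Real.sqrt (∑ i, w i * v i ^ 2) := by
    have h1 := Finset.sum_mul_sq_le_sq_mul_sq Finset.univ
      (fun i => Real.sqrt (w i) * u i) (fun i => Real.sqrt (w i) * v i)
    have e1 : ∀ i : ι, (Real.sqrt (w i) * u i) * (Real.sqrt (w i) * v i)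
        = w i * (u i * v i) := by
      intro i
      have hww : Real.sqrt (w i) * Real.sqrt (w i) = w i := Real.mul_self_sqrt (hw i)
      calc (Real.sqrt (w i) * u i) * (Real.sqrt (w i) * v i)
          = (Real.sqrt (w i) * Real.sqrt (w i)) * (u i * v i) := by ring
        _ = w i * (u i * v i) := by rw [hww]
    have e2 : ∀ i : ι, (Real.sqrt (w i) * u i) ^ 2 = w i * u i ^ 2 := by
      intro i
      have hww : Real.sqrt (w i) * Real.sqrt (w i) = w i := Real.mul_self_sqrt (hw i)
      calc (Real.sqrt (w i) * u i) ^ 2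
          = (Real.sqrt (w i) * Real.sqrt (w i)) * u i ^ 2 := by ring
        _ = w i * u i ^ 2 := by rw [hww]
    have e3 : ∀ i : ι, (Real.sqrt (w i) * v i) ^ 2 = w i * v i ^ 2 := by
      intro i
      have hww : Real.sqrt (w i) * Real.sqrt (w i) = w i := Real.mul_self_sqrt (hw i)
      calc (Real.sqrt (w i) * v i) ^ 2
          = (Real.sqrt (w i) * Real.sqrt (w i)) * v i ^ 2 := by ring
        _ = w i * v i ^ 2 := by rw [hww]
    rw [Finset.sum_congr rfl fun i _ => e1 i, Finset.sum_congr rfl fun i _ => e2 i,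
      Finset.sum_congr rfl fun i _ => e3 i] at h1
    calc (∑ i, w i * (u i * v i)) ≤ |∑ i, w i * (u i * v i)| := le_abs_self _
      _ = Real.sqrt ((∑ i, w i * (u i * v i)) ^ 2) := (Real.sqrt_sq_eq_abs _).symm
      _ ≤ Real.sqrt ((∑ i, w i * u i ^ 2) * (∑ i, w i * v i ^ 2)) :=
          Real.sqrt_le_sqrt h1
      _ = _ := Real.sqrt_mul ha _
  have expand : ∑ i, w i * (u i - v i) ^ 2
      = (∑ i, w i * u i ^ 2) + (∑ i, w i * v i ^ 2)
        - 2 * ∑ i, w i * (u i * v i) := by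
    rw [← Finset.sum_add_distrib, Finset.mul_sum, ← Finset.sum_sub_distrib]
    exact Finset.sum_congr rfl fun i _ => by ring
  have hA := Real.sq_sqrt ha
  have hB := Real.sq_sqrt hb
  rw [expand]
  nlinarith [hcs, hA, hB]

/-- the comparison term used in the Dirichlet-form estimate -/
def auxF (c : V → V → ℝ) (β : V → ℝ) (C : ℝ) {k : ℕ} (f : Config V (k+1) → ℝ)
    (x y : V) (η : Config V (k+1)) (z : V) : ℝ :=
  if z ≠ x ∧ z ≠ y ∧ η.1 z = 1 then
    C * (sipMeasure β η * (c x y * η.1 x * (β y + η.1 y) * (f (η.move x y) - f η) ^ 2))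
  else 0

lemma auxF_le {c : V → V → ℝ} {β : V → ℝ} {C : ℝ} {k : ℕ} {f : Config V (k+1) → ℝ}
    (hC : 0 ≤ C) (hμ : ∀ η : Config V (k+1), 0 ≤ sipMeasure β η)
    (hc : ∀ x y, 0 ≤ c x y) (hb : ∀ y, 0 ≤ β y) (x y : V) (η : Config V (k+1)) (z : V) :
    auxF c β C f x y η z
      ≤ C * (sipMeasure β η *
          (c x y * η.1 x * (β y + η.1 y) * (f (η.move x y) - f η) ^ 2)) := by
  unfold auxF
  split_ifs with h
  · exact le_rfl
  · refine mul_nonneg hC (mul_nonneg (hμ η) ?_)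
    refine mul_nonneg (mul_nonneg (mul_nonneg (hc x y) (Nat.cast_nonneg _)) ?_) (sq_nonneg _)
    exact add_nonneg (hb y) (Nat.cast_nonneg _)

lemma auxF_nonneg {c : V → V → ℝ} {β : V → ℝ} {C : ℝ} {k : ℕ} {f : Config V (k+1) → ℝ}
    (hC : 0 ≤ C) (hμ : ∀ η : Config V (k+1), 0 ≤ sipMeasure β η)
    (hc : ∀ x y, 0 ≤ c x y) (hb : ∀ y, 0 ≤ β y) (x y : V) (η : Config V (k+1)) (z : V) :
    0 ≤ auxF c β C f x y η z := by
  unfold auxF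
  split_ifs with h
  · refine mul_nonneg hC (mul_nonneg (hμ η) ?_)
    refine mul_nonneg (mul_nonneg (mul_nonneg (hc x y) (Nat.cast_nonneg _)) ?_) (sq_nonneg _)
    exact add_nonneg (hb y) (Nat.cast_nonneg _)
  · exact le_rfl

end AuxKill2
theorem kill_adjacent_comparison_step
    {V : Type*} [Fintype V] [DecidableEq V] (c : V → V → ℝ) (β : V → ℝ)
    (hsymm : ∀ x y, c x y = c y x) (hnonneg : ∀ x y, 0 ≤ c x y)
    (hloop : ∀ x, c x x = 0) (hconn : (graphOf c).Connected)
    (hβ : ∀ x, 0 < β x) (j : ℕ) (hj : 2 ≤ j)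
    (f : Config V (j + 1) → ℝ)
    (hf : ∀ η : Config V (j + 1), ¬(inOmega c η ∧ numStacks η = j + 1) → f η = 0)
    (g : Config V j → ℝ)
    (hg : g = fun ξ => Real.sqrt (∑ x, (β x / (∑ z, β z)) * (f (ξ.addOne x)) ^ 2)) :
    (∀ ξ : Config V j, ¬(inOmega c ξ ∧ numStacks ξ = j) → g ξ = 0) ∧
    sipNormSq β g = (((∑ z, β z) + (j + 1 : ℝ) - 1) / (∑ z, β z)) * sipNormSq β f ∧
    dirichletForm c β g ≤ (((∑ z, β z) + (j + 1 : ℝ) - 1) / (∑ z, β z)) *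
      dirichletForm c β f := by
  classical
  haveI hne : Nonempty V := hconn.nonempty
  have hS : 0 < ∑ z, β z := Finset.sum_pos (fun z _ => hβ z) Finset.univ_nonempty
  have hsupp : ∀ η : Config V (j+1), f η ≠ 0 → inOmega c η ∧ ∀ z, η.1 z ≤ 1 := by
    intro η hη
    by_cases h : inOmega c η ∧ numStacks η = j + 1
    · exact ⟨h.1, (numStacks_eq_iff η).1 h.2⟩
    · exact absurd (hf η h) hη
  set C : ℝ := ((∑ z, β z) + j) / (((j:ℝ)+1) * ∑ z, β z) with hCdef
  have hj1 : ((j:ℝ)+1) ≠ 0 := by positivity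
  have hconst : ((∑ z, β z) + (j + 1 : ℝ) - 1) / (∑ z, β z) = ((j:ℝ)+1) * C := by
    rw [hCdef]
    field_simp
    ring
  have hC0 : 0 ≤ C := by
    rw [hCdef]
    exact div_nonneg (add_nonneg hS.le (Nat.cast_nonneg _))
      (mul_nonneg (by positivity) hS.le)
  have hμ : ∀ {k : ℕ} (η : Config V k), 0 ≤ sipMeasure β η :=
    fun η => (sipMeasure_pos β hβ hne η).le
  have hkey : ∀ (ξ : Config V j) (x : V), ξ.1 x = 0 →
      sipMeasure β ξ * (β x / ∑ z, β z) = C * sipMeasure β (ξ.addOne x) :=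
    fun ξ x hx => sipMeasure_addOne β hβ hne ξ x hx
  have hwnonneg : ∀ x : V, 0 ≤ β x / ∑ z, β z := fun x => div_nonneg (hβ x).le hS.le
  -- Part 1
  have part1 : ∀ ξ : Config V j, ¬(inOmega c ξ ∧ numStacks ξ = j) → g ξ = 0 := by
    intro ξ hξ
    rw [hg]
    have hzero : ∀ x, f (ξ.addOne x) = 0 := by
      intro x
      by_contra hfx
      obtain ⟨hΩ, hone⟩ := hsupp _ hfx
      apply hξ
      have hle : ∀ z, ξ.1 z ≤ (ξ.addOne x).1 z := by
        intro z
        rw [Config.addOne_apply]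
        omega
      exact ⟨inOmega_mono hle hΩ,
        (numStacks_eq_iff ξ).2 fun z => le_trans (hle z) (hone z)⟩
    simp [hzero]
  refine ⟨part1, ?_, ?_⟩
  · -- Part 2 : norm identity
    have hgsq : ∀ ξ : Config V j, g ξ ^ 2 = ∑ x, (β x / ∑ z, β z) * f (ξ.addOne x) ^ 2 := by
      intro ξ
      rw [hg]
      exact Real.sq_sqrt (Finset.sum_nonneg fun x _ => mul_nonneg (hwnonneg x) (sq_nonneg _))
    have step1 : sipNormSq β g
        = ∑ ξ : Config V j, ∑ x, (sipMeasure β ξ * (β x / ∑ z, β z)) * f (ξ.addOne x) ^ 2 := by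
      unfold sipNormSq
      refine Finset.sum_congr rfl fun ξ _ => ?_
      rw [hgsq ξ, Finset.mul_sum]
      exact Finset.sum_congr rfl fun x _ => by ring
    have step2 : ∀ (ξ : Config V j) (x : V),
        (sipMeasure β ξ * (β x / ∑ z, β z)) * f (ξ.addOne x) ^ 2
          = C * (sipMeasure β (ξ.addOne x) * f (ξ.addOne x) ^ 2) := by
      intro ξ x
      by_cases hfx : f (ξ.addOne x) = 0
      · rw [hfx]; ring
      · have hone := (hsupp _ hfx).2 x
        rw [Config.addOne_apply, if_pos rfl] at hone
        have hx0 : ξ.1 x = 0 := by omega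
        rw [hkey ξ x hx0]; ring
    rw [step1, Finset.sum_congr rfl fun ξ _ => Finset.sum_congr rfl fun x _ => step2 ξ x]
    have step3 : ∑ ξ : Config V j, ∑ x, C * (sipMeasure β (ξ.addOne x) * f (ξ.addOne x) ^ 2)
        = C * ∑ ξ : Config V j, ∑ x, sipMeasure β (ξ.addOne x) * f (ξ.addOne x) ^ 2 := by
      rw [Finset.mul_sum]
      exact Finset.sum_congr rfl fun ξ _ => (Finset.mul_sum _ _ _).symm
    rw [step3, sum_addOne_eq (fun η _ => sipMeasure β η * f η ^ 2)]
    have step4 : ∀ η : Config V (j+1),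
        (∑ x, if 0 < η.1 x then sipMeasure β η * f η ^ 2 else 0)
          = ((j:ℝ)+1) * (sipMeasure β η * f η ^ 2) := by
      intro η
      by_cases hfη : f η = 0
      · simp [hfη]
      · have hstacks : numStacks η = j + 1 := by
          by_cases h : inOmega c η ∧ numStacks η = j + 1
          · exact h.2
          · exact absurd (hf η h) hfη
        rw [sum_ite_pos_count η (sipMeasure β η * f η ^ 2), hstacks]
        push_cast
        ring
    rw [Finset.sum_congr rfl fun η _ => step4 η, ← Finset.mul_sum, hconst]
    unfold sipNormSq
    ring
  · -- Part 3 : Dirichlet form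
    have hμ' : ∀ η : Config V (j+1), 0 ≤ sipMeasure β η := fun η => hμ η
    have hb' : ∀ y : V, 0 ≤ β y := fun y => (hβ y).le
    have claim : ∀ (x y : V) (ξ : Config V j),
        sipMeasure β ξ * (c x y * ξ.1 x * (β y + ξ.1 y) * (g (ξ.move x y) - g ξ) ^ 2)
          ≤ ∑ z, auxF c β C f x y (ξ.addOne z) z := by
      intro x y ξ
      have hRHS0 : 0 ≤ ∑ z, auxF c β C f x y (ξ.addOne z) z :=
        Finset.sum_nonneg fun z _ => auxF_nonneg hC0 hμ' hnonneg hb' x y _ z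
      by_cases hc : c x y = 0
      · rw [hc]; simpa using hRHS0
      by_cases hx0 : ξ.1 x = 0
      · rw [hx0]; simpa using hRHS0
      have hcpos : 0 < c x y := lt_of_le_of_ne (hnonneg x y) (Ne.symm hc)
      have hxy : x ≠ y := by
        rintro rfl
        exact hc (hloop x)
      have hx1 : 1 ≤ ξ.1 x := Nat.one_le_iff_ne_zero.2 hx0
      have hmv : ∀ w, (ξ.move x y).1 w
          = ξ.1 w - (if w = x then 1 else 0) + (if w = y then 1 else 0) :=
        fun w => Config.move_apply ξ x y w hx0
      have hA : (g (ξ.move x y) - g ξ) ^ 2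
          ≤ ∑ z, (β z / ∑ z', β z') *
              (f ((ξ.move x y).addOne z) - f (ξ.addOne z)) ^ 2 := by
        rw [hg]
        exact sqrt_sum_diff_sq_le _ _ _ hwnonneg
      have hPnn : 0 ≤ sipMeasure β ξ * (c x y * ξ.1 x * (β y + ξ.1 y)) := by
        refine mul_nonneg (hμ ξ) ?_
        exact mul_nonneg (mul_nonneg (hnonneg x y) (Nat.cast_nonneg _))
          (add_nonneg (hβ y).le (Nat.cast_nonneg _))
      have hstep : sipMeasure β ξ *
            (c x y * ξ.1 x * (β y + ξ.1 y) * (g (ξ.move x y) - g ξ) ^ 2)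
          ≤ ∑ z, (sipMeasure β ξ * (c x y * ξ.1 x * (β y + ξ.1 y))) *
              ((β z / ∑ z', β z') * (f ((ξ.move x y).addOne z) - f (ξ.addOne z)) ^ 2) := by
        rw [← Finset.mul_sum]
        calc sipMeasure β ξ *
              (c x y * ξ.1 x * (β y + ξ.1 y) * (g (ξ.move x y) - g ξ) ^ 2)
            = (sipMeasure β ξ * (c x y * ξ.1 x * (β y + ξ.1 y))) *
                (g (ξ.move x y) - g ξ) ^ 2 := by ring
          _ ≤ _ := mul_le_mul_of_nonneg_left hA hPnn
      refine le_trans hstep (Finset.sum_le_sum fun z _ => ?_)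
      by_cases hzx : z = x
      · subst hzx
        have hv : f (ξ.addOne z) = 0 := by
          apply hf
          rintro ⟨_, hns⟩
          have h1 := (numStacks_eq_iff _).1 hns z
          rw [Config.addOne_apply, if_pos rfl] at h1
          omega
        have hu : f ((ξ.move z y).addOne z) = 0 := by
          apply hf
          rintro ⟨hΩ, _⟩
          have h1 : 1 ≤ ((ξ.move z y).addOne z).1 z := by
            rw [Config.addOne_apply, if_pos rfl]
            omega
          have h2 : 1 ≤ ((ξ.move z y).addOne z).1 y := by
            rw [Config.addOne_apply, if_neg (Ne.symm hxy), hmv y,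
              if_neg (Ne.symm hxy), if_pos rfl]
            omega
          have hpos : (0:ℝ) < c z y * (((ξ.move z y).addOne z).1 z : ℝ) *
              (((ξ.move z y).addOne z).1 y : ℝ) :=
            mul_pos (mul_pos hcpos (by exact_mod_cast h1)) (by exact_mod_cast h2)
          exact absurd (hΩ z y) (ne_of_gt hpos)
        rw [hu, hv]
        simpa using auxF_nonneg hC0 hμ' hnonneg hb' z y (ξ.addOne z) z
      by_cases hzy : z = y
      · subst hzy
        have hu : f ((ξ.move x z).addOne z) = 0 := by
          apply hf
          rintro ⟨_, hns⟩
          have h1 := (numStacks_eq_iff _).1 hns z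
          rw [Config.addOne_apply, if_pos rfl, hmv z, if_neg hzx, if_pos rfl] at h1
          omega
        have hv : f (ξ.addOne z) = 0 := by
          apply hf
          rintro ⟨hΩ, _⟩
          have h1 : 1 ≤ (ξ.addOne z).1 x := by
            rw [Config.addOne_apply, if_neg (Ne.symm hzx)]
            omega
          have h2 : 1 ≤ (ξ.addOne z).1 z := by
            rw [Config.addOne_apply, if_pos rfl]
            omega
          have hpos : (0:ℝ) < c x z * ((ξ.addOne z).1 x : ℝ) * ((ξ.addOne z).1 z : ℝ) :=
            mul_pos (mul_pos hcpos (by exact_mod_cast h1)) (by exact_mod_cast h2)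
          exact absurd (hΩ x z) (ne_of_gt hpos)
        rw [hu, hv]
        simpa using auxF_nonneg hC0 hμ' hnonneg hb' x z (ξ.addOne z) z
      by_cases hz0 : ξ.1 z = 0
      · have hcomm : (ξ.move x y).addOne z = (ξ.addOne z).move x y :=
          Config.addOne_move ξ x y z hx0 hzx
        have hax : (ξ.addOne z).1 x = ξ.1 x := by
          rw [Config.addOne_apply, if_neg (Ne.symm hzx)]
          omega
        have hay : (ξ.addOne z).1 y = ξ.1 y := by
          rw [Config.addOne_apply, if_neg (Ne.symm hzy)]
          omega
        have hcond : z ≠ x ∧ z ≠ y ∧ (ξ.addOne z).1 z = 1 :=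
          ⟨hzx, hzy, by rw [Config.addOne_apply, if_pos rfl, hz0]⟩
        have hFval : auxF c β C f x y (ξ.addOne z) z
            = C * (sipMeasure β (ξ.addOne z) *
                (c x y * (ξ.addOne z).1 x * (β y + (ξ.addOne z).1 y) *
                  (f ((ξ.addOne z).move x y) - f (ξ.addOne z)) ^ 2)) := by
          unfold auxF
          rw [if_pos hcond]
        rw [hFval, hax, hay, ← hcomm]
        have key := hkey ξ z hz0
        apply le_of_eq
        calc sipMeasure β ξ * (c x y * ξ.1 x * (β y + ξ.1 y)) *
              ((β z / ∑ z', β z') * (f ((ξ.move x y).addOne z) - f (ξ.addOne z)) ^ 2)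
            = (sipMeasure β ξ * (β z / ∑ z', β z')) *
                (c x y * ξ.1 x * (β y + ξ.1 y) *
                  (f ((ξ.move x y).addOne z) - f (ξ.addOne z)) ^ 2) := by ring
          _ = (C * sipMeasure β (ξ.addOne z)) *
                (c x y * ξ.1 x * (β y + ξ.1 y) *
                  (f ((ξ.move x y).addOne z) - f (ξ.addOne z)) ^ 2) := by rw [key]
          _ = _ := by ring
      · have hv : f (ξ.addOne z) = 0 := by
          apply hf
          rintro ⟨_, hns⟩
          have h1 := (numStacks_eq_iff _).1 hns z
          rw [Config.addOne_apply, if_pos rfl] at h1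
          omega
        have hu : f ((ξ.move x y).addOne z) = 0 := by
          apply hf
          rintro ⟨_, hns⟩
          have h1 := (numStacks_eq_iff _).1 hns z
          rw [Config.addOne_apply, if_pos rfl, hmv z, if_neg hzx, if_neg hzy] at h1
          omega
        rw [hu, hv]
        simpa using auxF_nonneg hC0 hμ' hnonneg hb' x y (ξ.addOne z) z
    -- global chain
    have chain1 : ∑ ξ : Config V j, ∑ x, ∑ y,
        sipMeasure β ξ * (c x y * ξ.1 x * (β y + ξ.1 y) * (g (ξ.move x y) - g ξ) ^ 2)
        ≤ ∑ ξ : Config V j, ∑ x, ∑ y, ∑ z, auxF c β C f x y (ξ.addOne z) z :=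
      Finset.sum_le_sum fun ξ _ => Finset.sum_le_sum fun x _ =>
        Finset.sum_le_sum fun y _ => claim x y ξ
    have chain2 : ∑ ξ : Config V j, ∑ x, ∑ y, ∑ z, auxF c β C f x y (ξ.addOne z) z
        = ∑ ξ : Config V j, ∑ z, ∑ x, ∑ y, auxF c β C f x y (ξ.addOne z) z := by
      refine Finset.sum_congr rfl fun ξ _ => ?_
      rw [Finset.sum_congr rfl fun x (_ : x ∈ Finset.univ) =>
        (Finset.sum_comm (s := Finset.univ) (t := Finset.univ)
          (f := fun y z => auxF c β C f x y (ξ.addOne z) z))]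
      exact Finset.sum_comm
    have chain3 : ∑ ξ : Config V j, ∑ z, ∑ x, ∑ y, auxF c β C f x y (ξ.addOne z) z
        = ∑ η : Config V (j+1), ∑ z,
            if 0 < η.1 z then ∑ x, ∑ y, auxF c β C f x y η z else 0 :=
      sum_addOne_eq (fun η z => ∑ x, ∑ y, auxF c β C f x y η z)
    have chain4 : ∀ η : Config V (j+1),
        (∑ z, if 0 < η.1 z then ∑ x, ∑ y, auxF c β C f x y η z else 0)
          ≤ ((j:ℝ)+1) * ∑ x, ∑ y, C * (sipMeasure β η *
              (c x y * η.1 x * (β y + η.1 y) * (f (η.move x y) - f η) ^ 2)) := by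
      intro η
      have hGnn : 0 ≤ ∑ x, ∑ y, C * (sipMeasure β η *
          (c x y * η.1 x * (β y + η.1 y) * (f (η.move x y) - f η) ^ 2)) := by
        refine Finset.sum_nonneg fun x _ => Finset.sum_nonneg fun y _ => ?_
        refine mul_nonneg hC0 (mul_nonneg (hμ η) ?_)
        exact mul_nonneg (mul_nonneg (mul_nonneg (hnonneg x y) (Nat.cast_nonneg _))
          (add_nonneg (hβ y).le (Nat.cast_nonneg _))) (sq_nonneg _)
      calc (∑ z, if 0 < η.1 z then ∑ x, ∑ y, auxF c β C f x y η z else 0)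
          ≤ ∑ z, if 0 < η.1 z then ∑ x, ∑ y, C * (sipMeasure β η *
              (c x y * η.1 x * (β y + η.1 y) * (f (η.move x y) - f η) ^ 2)) else 0 := by
            refine Finset.sum_le_sum fun z _ => ?_
            split_ifs
            · exact Finset.sum_le_sum fun x _ => Finset.sum_le_sum fun y _ =>
                auxF_le hC0 hμ' hnonneg hb' x y η z
            · exact le_rfl
        _ = (numStacks η : ℝ) * ∑ x, ∑ y, C * (sipMeasure β η *
              (c x y * η.1 x * (β y + η.1 y) * (f (η.move x y) - f η) ^ 2)) :=
            sum_ite_pos_count η _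
        _ ≤ ((j:ℝ)+1) * ∑ x, ∑ y, C * (sipMeasure β η *
              (c x y * η.1 x * (β y + η.1 y) * (f (η.move x y) - f η) ^ 2)) := by
            refine mul_le_mul_of_nonneg_right ?_ hGnn
            have h := numStacks_le_total η
            exact_mod_cast h
    have chain5 : ∑ η : Config V (j+1), (((j:ℝ)+1) * ∑ x, ∑ y, C * (sipMeasure β η *
          (c x y * η.1 x * (β y + η.1 y) * (f (η.move x y) - f η) ^ 2)))
        = (((j:ℝ)+1) * C) * ∑ η : Config V (j+1), ∑ x, ∑ y, sipMeasure β η *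
            (c x y * η.1 x * (β y + η.1 y) * (f (η.move x y) - f η) ^ 2) := by
      rw [Finset.mul_sum]
      refine Finset.sum_congr rfl fun η _ => ?_
      have e : ∑ x, ∑ y, C * (sipMeasure β η *
            (c x y * η.1 x * (β y + η.1 y) * (f (η.move x y) - f η) ^ 2))
          = C * ∑ x, ∑ y, sipMeasure β η *
              (c x y * η.1 x * (β y + η.1 y) * (f (η.move x y) - f η) ^ 2) := by
        rw [Finset.mul_sum]
        exact Finset.sum_congr rfl fun x _ => (Finset.mul_sum _ _ _).symm
      rw [e]
      ring
    have hmain : ∑ ξ : Config V j, ∑ x, ∑ y,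
        sipMeasure β ξ * (c x y * ξ.1 x * (β y + ξ.1 y) * (g (ξ.move x y) - g ξ) ^ 2)
        ≤ (((j:ℝ)+1) * C) * ∑ η : Config V (j+1), ∑ x, ∑ y, sipMeasure β η *
            (c x y * η.1 x * (β y + η.1 y) * (f (η.move x y) - f η) ^ 2) := by
      refine chain1.trans ?_
      rw [chain2, chain3]
      exact (Finset.sum_le_sum fun η _ => chain4 η).trans (le_of_eq chain5)
    unfold dirichletForm
    rw [hconst]
    have h2 := mul_le_mul_of_nonneg_left hmain (by norm_num : (0:ℝ) ≤ 1/2)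
    linarith
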